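/- Let k ≥ 2 be even and t real with |t| < 1. The maximum eigenvalue λ_k of the real symmetric k×k tridiagonal matrix B with diagonal d_j = 4j(k−j)+t²(2j−1)(2k+1−2j) and off-diagonals c_j = |t|√(4j(2j+1)(k−j)(2k−1−2j)) satisfies k² ≤ λ_k ≤ C k² for some constant C independent of k, i.e., λ_k = Θ(k²). -/

import Mathlib

open Matrix

lemma sum_ite_nat_le {k : ℕ} (p : ℕ) (c : ℝ) (hc : 0 ≤ c) :
    ∑ j : Fin k, (if (j : ℕ) = p then c else 0) ≤ c := by
  rcases lt_or_ge p k with h | h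
  · calc ∑ j : Fin k, (if (j : ℕ) = p then c else 0)
        = ∑ j : Fin k, (if j = (⟨p, h⟩ : Fin k) then c else 0) := by
          refine Finset.sum_congr rfl fun j _ => ?_
          by_cases hj : (j : ℕ) = p
          · rw [if_pos hj, if_pos (Fin.ext hj)]
          · rw [if_neg hj, if_neg (fun e => hj (by rw [e]))]
      _ = c := by rw [Finset.sum_ite_eq' Finset.univ]; simp
      _ ≤ c := le_rfl
  · have : ∑ j : Fin k, (if (j : ℕ) = p then c else 0) = 0 :=
      Finset.sum_eq_zero fun j _ => if_neg (by have := j.isLt; omega)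
    rw [this]; exact hc

lemma sum_ite_nat_le' {k : ℕ} (p : ℕ) (c : ℝ) (hc : 0 ≤ c) :
    ∑ j : Fin k, (if p = (j : ℕ) + 1 then c else 0) ≤ c := by
  rcases Nat.eq_zero_or_pos p with hp | hp
  · have : ∑ j : Fin k, (if p = (j : ℕ) + 1 then c else 0) = 0 :=
      Finset.sum_eq_zero fun j _ => if_neg (by omega)
    rw [this]; exact hc
  · calc ∑ j : Fin k, (if p = (j : ℕ) + 1 then c else 0)
        = ∑ j : Fin k, (if (j : ℕ) = p - 1 then c else 0) := by
          refine Finset.sum_congr rfl fun j _ => ?_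
          by_cases hj : p = (j : ℕ) + 1
          · rw [if_pos hj, if_pos (by omega)]
          · rw [if_neg hj, if_neg (by omega)]
      _ ≤ c := sum_ite_nat_le _ _ hc

section bounds

variable {t m K : ℝ}

lemma diag_nonneg (hm1 : 1 ≤ m) (hmk : m ≤ K) :
    0 ≤ 4 * m * (K - m) + t ^ 2 * (2 * m - 1) * (2 * K + 1 - 2 * m) := by
  nlinarith [sq_nonneg t, mul_nonneg (sq_nonneg t) (mul_nonneg
    (by linarith : (0:ℝ) ≤ 2*m-1) (by linarith : (0:ℝ) ≤ 2*K+1-2*m))]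

lemma diag_le (ht : t ^ 2 ≤ 1) (hK : 2 ≤ K) (hm1 : 1 ≤ m) (hmk : m ≤ K) :
    4 * m * (K - m) + t ^ 2 * (2 * m - 1) * (2 * K + 1 - 2 * m) ≤ 8 * K ^ 2 := by
  have h1 : 4 * m * (K - m) ≤ 4 * K ^ 2 := by nlinarith
  have h2 : (2 * m - 1) * (2 * K + 1 - 2 * m) ≤ 4 * K ^ 2 := by nlinarith
  have h3 : 0 ≤ (2 * m - 1) * (2 * K + 1 - 2 * m) :=
    mul_nonneg (by linarith) (by linarith)
  nlinarith [sq_nonneg t]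

lemma off_le (ht : |t| ≤ 1) (hK : 2 ≤ K) (hm1 : 1 ≤ m) (hmk : m ≤ K) :
    |t| * Real.sqrt (4 * m * (2 * m + 1) * (K - m) * (2 * K - 1 - 2 * m)) ≤ 5 * K ^ 2 := by
  have hKpos : (0:ℝ) < K := by linarith
  have hX : 4 * m * (2 * m + 1) * (K - m) * (2 * K - 1 - 2 * m) ≤ 25 * K ^ 4 := by
    rcases le_or_gt (2 * K - 1 - 2 * m) 0 with h | h
    · have hP : 0 ≤ 4 * m * (2 * m + 1) * (K - m) :=
        mul_nonneg (mul_nonneg (by linarith) (by linarith)) (by linarith)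
      nlinarith [mul_nonneg hP (by linarith : (0:ℝ) ≤ -(2 * K - 1 - 2 * m)), pow_pos hKpos 4]
    · have h1 : 4 * m * (2 * m + 1) ≤ 12 * K ^ 2 := by nlinarith
      have h2 : (K - m) * (2 * K - 1 - 2 * m) ≤ 2 * K ^ 2 := by nlinarith
      have h2' : 0 ≤ (K - m) * (2 * K - 1 - 2 * m) := mul_nonneg (by linarith) (by linarith)
      nlinarith [mul_le_mul h1 h2 h2' (by linarith : (0:ℝ) ≤ 12 * K ^ 2)]
  have hsq : Real.sqrt (4 * m * (2 * m + 1) * (K - m) * (2 * K - 1 - 2 * m)) ≤ 5 * K ^ 2 := by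
    rw [show 5 * K ^ 2 = Real.sqrt ((5 * K ^ 2) ^ 2) from (Real.sqrt_sq (by positivity)).symm]
    exact Real.sqrt_le_sqrt (by nlinarith)
  calc |t| * Real.sqrt (4 * m * (2 * m + 1) * (K - m) * (2 * K - 1 - 2 * m))
      ≤ 1 * (5 * K ^ 2) := mul_le_mul ht hsq (Real.sqrt_nonneg _) zero_le_one
    _ = 5 * K ^ 2 := one_mul _

end bounds

lemma rayleigh_diag_le {k : ℕ} (A : Matrix (Fin k) (Fin k) ℝ)
    (hA : A.IsHermitian) (lam : ℝ) (hub : ∀ i, hA.eigenvalues i ≤ lam) (i₀ : Fin k) :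
    A i₀ i₀ ≤ lam := by
  classical
  set b := hA.eigenvectorBasis with hb
  set μ := hA.eigenvalues with hμ
  set x : EuclideanSpace ℝ (Fin k) := EuclideanSpace.single i₀ (1:ℝ) with hxdef
  set c : Fin k → ℝ := fun i => inner ℝ (b i) x with hc
  have hxsum : (∑ i, c i • b i) = x := b.sum_repr' x
  have hAx : A *ᵥ (x : Fin k → ℝ) = ∑ i, (c i * μ i) • (b i : EuclideanSpace ℝ (Fin k)) := by
    conv_lhs => rw [← hxsum]
    have h1 : A *ᵥ (∑ i, c i • b i : EuclideanSpace ℝ (Fin k))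
        = ∑ i, c i • (A *ᵥ (b i : EuclideanSpace ℝ (Fin k))) := by
      simp only [WithLp.ofLp_sum, WithLp.ofLp_smul, Matrix.mulVec_sum, Matrix.mulVec_smul]
    rw [h1, WithLp.ofLp_sum]
    refine Finset.sum_congr rfl fun i _ => ?_
    rw [hA.mulVec_eigenvectorBasis i, WithLp.ofLp_smul, smul_smul]
  have key : A i₀ i₀ = inner ℝ x (WithLp.toLp 2 (A *ᵥ (x : Fin k → ℝ))) := by
    rw [hxdef, EuclideanSpace.inner_eq_star_dotProduct]
    simp [dotProduct, Matrix.mulVec, EuclideanSpace.single_apply, Pi.single_apply,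
      mul_ite, ite_mul, Finset.sum_ite_eq', Finset.sum_ite_eq]
  rw [key, hAx, WithLp.toLp_ofLp]
  have hinner : (inner ℝ x (∑ i, (c i * μ i) • (b i : EuclideanSpace ℝ (Fin k))) : ℝ)
      = ∑ i, μ i * (c i * c i) := by
    rw [inner_sum]
    refine Finset.sum_congr rfl fun i _ => ?_
    rw [real_inner_smul_right, real_inner_comm]
    ring
  rw [hinner]
  have hsum : ∑ i, c i * c i = 1 := by
    have h := b.sum_inner_mul_inner x x
    have hxx : (inner ℝ x x : ℝ) = 1 := by
      rw [hxdef]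
      simp [EuclideanSpace.inner_single_left, EuclideanSpace.single_apply]
    rw [hxx] at h
    rw [← h]
    refine Finset.sum_congr rfl fun i _ => ?_
    simp only [hc]
    rw [real_inner_comm x (b i)]
  calc ∑ i, μ i * (c i * c i) ≤ ∑ i, lam * (c i * c i) := by
        refine Finset.sum_le_sum fun i _ => ?_
        exact mul_le_mul_of_nonneg_right (hub i) (mul_self_nonneg _)
    _ = lam := by rw [← Finset.mul_sum, hsum, mul_one]

theorem stmt19 :
    ∃ C : ℝ, 0 < C ∧ ∀ (k : ℕ), 2 ≤ k → Even k → ∀ (t : ℝ), |t| < 1 →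
      ∀ (lam : ℝ),
        IsGreatest { μ : ℝ | ∃ v : Fin k → ℝ, v ≠ 0 ∧
          (Matrix.of (fun i j : Fin k =>
            if i = j then
              4 * ((i : ℕ) + 1 : ℝ) * ((k : ℝ) - ((i : ℕ) + 1))
                + t ^ 2 * (2 * ((i : ℕ) + 1 : ℝ) - 1) * (2 * (k : ℝ) + 1 - 2 * ((i : ℕ) + 1))
            else if (j : ℕ) = (i : ℕ) + 1 then
              |t| * Real.sqrt (4 * ((i : ℕ) + 1 : ℝ) * (2 * ((i : ℕ) + 1) + 1)
                * ((k : ℝ) - ((i : ℕ) + 1)) * (2 * (k : ℝ) - 1 - 2 * ((i : ℕ) + 1)))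
            else if (i : ℕ) = (j : ℕ) + 1 then
              |t| * Real.sqrt (4 * ((j : ℕ) + 1 : ℝ) * (2 * ((j : ℕ) + 1) + 1)
                * ((k : ℝ) - ((j : ℕ) + 1)) * (2 * (k : ℝ) - 1 - 2 * ((j : ℕ) + 1)))
            else 0)).mulVec v = μ • v } lam →
        (k : ℝ) ^ 2 ≤ lam ∧ lam ≤ C * (k : ℝ) ^ 2 := by
  classical
  refine ⟨18, by norm_num, fun k hk hke t ht lam hgr => ?_⟩
  have hK2' : (2:ℝ) ≤ (k : ℝ) := by exact_mod_cast hk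
  set K : ℝ := (k : ℝ) with hKdef
  have hK2 : (2:ℝ) ≤ K := hK2'
  set A : Matrix (Fin k) (Fin k) ℝ := Matrix.of (fun i j : Fin k =>
            if i = j then
              4 * ((i : ℕ) + 1 : ℝ) * ((k : ℝ) - ((i : ℕ) + 1))
                + t ^ 2 * (2 * ((i : ℕ) + 1 : ℝ) - 1) * (2 * (k : ℝ) + 1 - 2 * ((i : ℕ) + 1))
            else if (j : ℕ) = (i : ℕ) + 1 then
              |t| * Real.sqrt (4 * ((i : ℕ) + 1 : ℝ) * (2 * ((i : ℕ) + 1) + 1)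
                * ((k : ℝ) - ((i : ℕ) + 1)) * (2 * (k : ℝ) - 1 - 2 * ((i : ℕ) + 1)))
            else if (i : ℕ) = (j : ℕ) + 1 then
              |t| * Real.sqrt (4 * ((j : ℕ) + 1 : ℝ) * (2 * ((j : ℕ) + 1) + 1)
                * ((k : ℝ) - ((j : ℕ) + 1)) * (2 * (k : ℝ) - 1 - 2 * ((j : ℕ) + 1)))
            else 0) with hAdef
  have hA : A.IsHermitian := by
    rw [Matrix.IsHermitian]
    ext i j
    simp only [hAdef, conjTranspose_apply, of_apply, star_trivial]
    by_cases h1 : i = j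
    · subst h1; rfl
    · have h1' : j ≠ i := fun e => h1 e.symm
      by_cases h2 : (j : ℕ) = (i : ℕ) + 1
      · rw [if_neg h1', if_neg (by omega : ¬ (i : ℕ) = (j : ℕ) + 1), if_pos h2,
          if_neg h1, if_pos h2]
      · by_cases h3 : (i : ℕ) = (j : ℕ) + 1
        · rw [if_neg h1', if_pos h3, if_neg h1, if_neg h2, if_pos h3]
        · rw [if_neg h1', if_neg h3, if_neg h2, if_neg h1, if_neg h2, if_neg h3]
  -- basic facts
  have hm1 : ∀ i : Fin k, (1:ℝ) ≤ ((i:ℕ) + 1 : ℝ) := fun i => by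
    have : (0:ℝ) ≤ ((i:ℕ) : ℝ) := Nat.cast_nonneg _
    linarith
  have hmk : ∀ i : Fin k, ((i:ℕ) + 1 : ℝ) ≤ K := fun i => by
    have := i.isLt
    rw [hKdef]
    exact_mod_cast this
  -- entrywise row bound
  have hrow : ∀ i j : Fin k, |A i j| ≤
      (if j = i then 8 * K ^ 2 else 0) + (if (j : ℕ) = (i : ℕ) + 1 then 5 * K ^ 2 else 0)
        + (if (i : ℕ) = (j : ℕ) + 1 then 5 * K ^ 2 else 0) := by
    intro i j
    simp only [hAdef, of_apply]
    by_cases h1 : i = j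
    · subst h1
      rw [if_pos rfl, if_neg (show ¬((i:ℕ) = (i:ℕ) + 1) from by omega), if_pos rfl]
      rw [abs_of_nonneg (diag_nonneg (hm1 i) (hmk i))]
      have := diag_le (t := t) (by nlinarith [abs_nonneg t, sq_abs t] : t ^ 2 ≤ 1) hK2 (hm1 i) (hmk i)
      linarith
    · have h1' : j ≠ i := fun e => h1 e.symm
      by_cases h2 : (j : ℕ) = (i : ℕ) + 1
      · rw [if_neg h1, if_pos h2, if_neg h1', if_pos h2, if_neg (by omega)]
        rw [abs_of_nonneg (mul_nonneg (abs_nonneg t) (Real.sqrt_nonneg _))]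
        have := off_le (m := ((i:ℕ) + 1 : ℝ)) ht.le hK2 (hm1 i) (hmk i)
        linarith
      · by_cases h3 : (i : ℕ) = (j : ℕ) + 1
        · rw [if_neg h1, if_neg h2, if_pos h3, if_neg h1', if_neg h2, if_pos h3]
          rw [abs_of_nonneg (mul_nonneg (abs_nonneg t) (Real.sqrt_nonneg _))]
          have := off_le (m := ((j:ℕ) + 1 : ℝ)) ht.le hK2 (hm1 j) (hmk j)
          linarith
        · rw [if_neg h1, if_neg h2, if_neg h3, if_neg h1', if_neg h2, if_neg h3]
          simp
  have hKsq : (0:ℝ) ≤ 5 * K ^ 2 := by positivity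
  have hrowsum : ∀ i : Fin k, ∑ j, |A i j| ≤ 18 * K ^ 2 := by
    intro i
    calc ∑ j, |A i j|
        ≤ ∑ j, ((if j = i then 8 * K ^ 2 else 0) + (if (j : ℕ) = (i : ℕ) + 1 then 5 * K ^ 2 else 0)
            + (if (i : ℕ) = (j : ℕ) + 1 then 5 * K ^ 2 else 0)) :=
          Finset.sum_le_sum fun j _ => hrow i j
      _ = (∑ j : Fin k, if j = i then 8 * K ^ 2 else 0)
            + (∑ j : Fin k, if (j : ℕ) = (i : ℕ) + 1 then 5 * K ^ 2 else 0)
            + (∑ j : Fin k, if (i : ℕ) = (j : ℕ) + 1 then 5 * K ^ 2 else 0) := by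
          rw [Finset.sum_add_distrib, Finset.sum_add_distrib]
      _ ≤ 8 * K ^ 2 + 5 * K ^ 2 + 5 * K ^ 2 := by
          refine add_le_add (add_le_add ?_ (sum_ite_nat_le _ _ hKsq)) (sum_ite_nat_le' _ _ hKsq)
          rw [Finset.sum_ite_eq' Finset.univ]
          simp
      _ = 18 * K ^ 2 := by ring
  constructor
  · -- lower bound via Rayleigh quotient at diagonal index k/2 - 1
    have hub : ∀ i, hA.eigenvalues i ≤ lam := by
      intro i
      refine hgr.2 ⟨(hA.eigenvectorBasis i : EuclideanSpace ℝ (Fin k)), ?_, ?_⟩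
      · simpa using hA.eigenvectorBasis.orthonormal.ne_zero i
      · exact hA.mulVec_eigenvectorBasis i
    have hhalf : 1 ≤ k / 2 := by omega
    have hlt : k / 2 - 1 < k := by omega
    set i₀ : Fin k := ⟨k / 2 - 1, hlt⟩ with hi₀
    have hray := rayleigh_diag_le A hA lam hub i₀
    have hval : ((i₀ : ℕ) : ℝ) + 1 = K / 2 := by
      have h2 : (k / 2) * 2 = k := Nat.div_mul_cancel hke.two_dvd
      rw [hKdef, hi₀]
      have : ((k / 2 - 1 : ℕ) : ℝ) = K / 2 - 1 := by
        rw [hKdef]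
        have : ((k / 2 : ℕ) : ℝ) = (k : ℝ) / 2 := by
          field_simp
          exact_mod_cast h2
        push_cast [Nat.cast_sub (by omega : 1 ≤ k / 2)] at this ⊢
        rw [this]
      rw [this]; ring
    have hdiag : A i₀ i₀ = 4 * (((i₀:ℕ) + 1 : ℝ)) * ((k:ℝ) - ((i₀:ℕ) + 1))
        + t ^ 2 * (2 * ((i₀:ℕ) + 1 : ℝ) - 1) * (2 * (k:ℝ) + 1 - 2 * ((i₀:ℕ) + 1)) := by
      rw [hAdef]
      simp
    have hKhalf : K / 2 ≥ 1 := by linarith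
    have : K ^ 2 ≤ A i₀ i₀ := by
      rw [hdiag, ← hKdef]
      rw [show ((i₀:ℕ) : ℝ) + 1 = K / 2 from hval]
      nlinarith [sq_nonneg t, mul_nonneg (sq_nonneg t)
        (by nlinarith : (0:ℝ) ≤ (2 * (K/2) - 1) * (2 * K + 1 - 2 * (K/2)))]
    linarith
  · -- upper bound via Gershgorin
    obtain ⟨v, hv, hAv⟩ := hgr.1
    obtain ⟨i₀, -, hmax⟩ := Finset.exists_max_image Finset.univ (fun i => |v i|)
      ⟨⟨0, by omega⟩, Finset.mem_univ _⟩
    set M : ℝ := |v i₀| with hM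
    have hMpos : 0 < M := by
      obtain ⟨j, hj⟩ := Function.ne_iff.mp hv
      exact lt_of_lt_of_le (abs_pos.mpr hj) (hmax j (Finset.mem_univ j))
    have h0 : lam * v i₀ = ∑ j, A i₀ j * v j := by
      have := congrFun hAv i₀
      simp only [Matrix.mulVec, dotProduct, Pi.smul_apply, smul_eq_mul] at this
      exact this.symm
    have hchain : |lam| * M ≤ 18 * K ^ 2 * M := by
      calc |lam| * M = |lam * v i₀| := (abs_mul _ _).symm
        _ = |∑ j, A i₀ j * v j| := by rw [h0]
        _ ≤ ∑ j, |A i₀ j * v j| := Finset.abs_sum_le_sum_abs _ _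
        _ = ∑ j, |A i₀ j| * |v j| := by simp [abs_mul]
        _ ≤ ∑ j, |A i₀ j| * M :=
            Finset.sum_le_sum fun j _ =>
              mul_le_mul_of_nonneg_left (hmax j (Finset.mem_univ j)) (abs_nonneg _)
        _ = (∑ j, |A i₀ j|) * M := (Finset.sum_mul _ _ _).symm
        _ ≤ 18 * K ^ 2 * M := mul_le_mul_of_nonneg_right (hrowsum i₀) hMpos.le
    have : |lam| ≤ 18 * K ^ 2 := le_of_mul_le_mul_right hchain hMpos
    calc lam ≤ |lam| := le_abs_self lam
      _ ≤ 18 * K ^ 2 := this
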